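/- arXiv:0710.2281 — 2 statements merged into one kernel-verified Lean document; each statement's English description precedes it below -/
import Mathlib

section
/- For every β ∈ ℂ, the identity exp(β·∑_{k≥1} (z^k/k!)·h_{k−1}) = ∑_{n≥0} (zⁿ/n!)·(T + β·M_h)ⁿ(1) holds in the ring A⟦z⟧ of formal power series in z with coefficients in A, where M_h denotes the operator of multiplication by h = h₀ in A, (T + β·M_h)ⁿ(1) ∈ A is the n-fold application of the operator T + β·M_h to the constant 1, and exp of a power series with zero constant term is defined by its exponential series. (The exponent on the left equals β·∫₀^z e^{xT}h dx, and the right-hand side is e^{z(T+βh)}·1.) -/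
/- `A = ℂ[h₀,h₁,h₂,…] = MvPolynomial ℕ ℂ` with the derivation `T`, `T(h_k) = h_{k+1}`,
where `h = h₀ = X 0`. -/

/-- The derivation `T` of `A = ℂ[h₀,h₁,…]` with `T(h_k) = h_{k+1}`. -/
noncomputable def TA : Derivation ℂ (MvPolynomial ℕ ℂ) (MvPolynomial ℕ ℂ) :=
  MvPolynomial.mkDerivation ℂ fun k => MvPolynomial.X (k + 1)

/-- The exponential `exp f = ∑_{m ≥ 0} fᵐ/m!` of a formal power series `f` with zero constant
term; since `coeff n (fᵐ) = 0` for `m > n` when `f` has zero constant term, the `n`-th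
coefficient of `exp f` is the finite sum `∑_{m=0}^{n} (1/m!) coeff n (fᵐ)`. -/
noncomputable def expPS {R : Type*} [CommRing R] [Algebra ℚ R] (f : PowerSeries R) :
    PowerSeries R :=
  PowerSeries.mk fun n =>
    ∑ m ∈ Finset.range (n + 1), (m.factorial : ℚ)⁻¹ • PowerSeries.coeff n (f ^ m)

open PowerSeries Finset

section General

variable {R : Type*} [CommRing R] [Algebra ℚ R]

omit [Algebra ℚ R] in
lemma coeff_pow_eq_zero' {f : R⟦X⟧} (hf : constantCoeff f = 0) {k m : ℕ} (h : k < m) :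
    coeff k (f ^ m) = 0 := by
  have hd : (X : R⟦X⟧) ^ m ∣ f ^ m := pow_dvd_pow_of_dvd (X_dvd_iff.mpr hf) m
  exact X_pow_dvd_iff.mp hd k h

lemma coeff_expPS_trunc {f : R⟦X⟧} (hf : constantCoeff f = 0) {n N : ℕ} (h : n ≤ N) :
    coeff n (expPS f) =
      coeff n (∑ m ∈ Finset.range (N + 1), (m.factorial : ℚ)⁻¹ • f ^ m) := by
  rw [map_sum]
  simp only [expPS, coeff_mk, coeff_smul]
  refine Finset.sum_subset (Finset.range_subset_range.mpr (by omega)) ?_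
  intro m hm hnm
  simp only [Finset.mem_range, not_lt] at hnm
  rw [coeff_pow_eq_zero' hf (by omega), smul_zero]

omit [Algebra ℚ R] in
lemma delta_pow (δ : R⟦X⟧ → R⟦X⟧)
    (hmul : ∀ a b, δ (a * b) = δ a * b + a * δ b) (f : R⟦X⟧) :
    ∀ m : ℕ, δ (f ^ (m + 1)) = (m + 1) • (f ^ m * δ f) := by
  intro m
  induction m with
  | zero => simp
  | succ m ih =>
    rw [pow_succ, hmul, ih, smul_mul_assoc]
    have h3 : f ^ m * δ f * f = f ^ (m + 1) * δ f := by rw [pow_succ]; ring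
    rw [h3, ← succ_nsmul]

lemma delta_expPS (δ : R⟦X⟧ → R⟦X⟧)
    (hadd : ∀ a b, δ (a + b) = δ a + δ b)
    (hsmul : ∀ (q : ℚ) (a : R⟦X⟧), δ (q • a) = q • δ a)
    (hmul : ∀ a b, δ (a * b) = δ a * b + a * δ b)
    (hvan : ∀ (g : R⟦X⟧) (n : ℕ), (∀ k ≤ n + 1, coeff k g = 0) → coeff n (δ g) = 0)
    {f : R⟦X⟧} (hf : constantCoeff f = 0) :
    δ (expPS f) = δ f * expPS f := by
  have hone : δ 1 = 0 := by
    have h := hmul 1 1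
    rw [one_mul, mul_one, one_mul] at h
    exact (left_eq_add.mp h)
  let δ' : R⟦X⟧ →+ R⟦X⟧ := AddMonoidHom.mk' δ hadd
  have hδ' : ∀ a, δ' a = δ a := fun _ => rfl
  ext n : 1
  set S : R⟦X⟧ := ∑ m ∈ Finset.range (n + 2), (m.factorial : ℚ)⁻¹ • f ^ m with hS
  have hdiff : coeff n (δ (expPS f)) = coeff n (δ S) := by
    have h1 : δ (expPS f) = δ (expPS f - S) + δ S := by
      rw [← hδ', ← hδ', ← hδ', ← map_add, sub_add_cancel]
    rw [h1, map_add]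
    have hz : coeff n (δ (expPS f - S)) = 0 := by
      refine hvan _ n fun k hk => ?_
      rw [map_sub, coeff_expPS_trunc hf (show k ≤ n + 1 from hk), sub_eq_zero]
    rw [hz, zero_add]
  rw [hdiff]
  have hδS : δ S = ∑ m ∈ Finset.range (n + 2), (m.factorial : ℚ)⁻¹ • δ (f ^ m) := by
    rw [hS, ← hδ', map_sum]
    refine Finset.sum_congr rfl fun m _ => ?_
    rw [hδ', hsmul]
  rw [hδS]
  rw [Finset.sum_range_succ']
  simp only [pow_zero, hone, smul_zero, add_zero]
  have hterm : ∀ m : ℕ, ((m + 1).factorial : ℚ)⁻¹ • δ (f ^ (m + 1))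
      = (m.factorial : ℚ)⁻¹ • (δ f * f ^ m) := by
    intro m
    rw [delta_pow δ hmul f m, ← Nat.cast_smul_eq_nsmul ℚ, smul_smul]
    rw [Nat.factorial_succ, mul_comm (f ^ m)]
    congr 1
    push_cast
    rw [inv_mul_eq_div, div_eq_iff (by positivity)]
    field_simp
  simp only [hterm]
  have hrhs : coeff n (δ f * expPS f)
      = coeff n (∑ m ∈ Finset.range (n + 1), (m.factorial : ℚ)⁻¹ • (δ f * f ^ m)) := by
    have h2 : coeff n (∑ m ∈ Finset.range (n + 1), (m.factorial : ℚ)⁻¹ • (δ f * f ^ m))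
        = coeff n (δ f * ∑ m ∈ Finset.range (n + 1), (m.factorial : ℚ)⁻¹ • f ^ m) := by
      rw [Finset.mul_sum]
      congr 1
      refine Finset.sum_congr rfl fun m _ => ?_
      rw [mul_smul_comm]
    rw [h2, coeff_mul, coeff_mul]
    refine Finset.sum_congr rfl fun p hp => ?_
    congr 1
    rw [← coeff_expPS_trunc hf (Finset.HasAntidiagonal.antidiagonal.snd_le hp)]
  rw [hrhs]

lemma coeff_derivativeFun' {S : Type*} [CommRing S] (f : S⟦X⟧) (n : ℕ) :
    coeff n (derivativeFun f) = coeff (n + 1) f * (n + 1) :=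
  coeff_derivative f n

end General

section Main

noncomputable abbrev AA := MvPolynomial ℕ ℂ

/-- coefficientwise application of `TA` to a power series. -/
noncomputable def Ttil (g : PowerSeries AA) : PowerSeries AA :=
  PowerSeries.mk fun n => TA (PowerSeries.coeff n g)

lemma coeff_Ttil (g : PowerSeries AA) (n : ℕ) :
    coeff n (Ttil g) = TA (coeff n g) := coeff_mk _ _

lemma Ttil_add (a b : PowerSeries AA) : Ttil (a + b) = Ttil a + Ttil b := by
  ext n : 1
  rw [map_add, coeff_Ttil, coeff_Ttil, coeff_Ttil, map_add, map_add]

lemma Ttil_smul (q : ℚ) (a : PowerSeries AA) : Ttil (q • a) = q • Ttil a := by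
  ext n : 1
  rw [coeff_Ttil, coeff_smul, coeff_smul, coeff_Ttil]
  exact map_smul (LinearMap.restrictScalars ℚ TA.toLinearMap) q _

lemma Ttil_mul (a b : PowerSeries AA) : Ttil (a * b) = Ttil a * b + a * Ttil b := by
  ext n : 1
  rw [coeff_Ttil, map_add, coeff_mul, coeff_mul, coeff_mul, map_sum, ← Finset.sum_add_distrib]
  refine Finset.sum_congr rfl fun p _ => ?_
  rw [Derivation.leibniz, coeff_Ttil, coeff_Ttil, smul_eq_mul, smul_eq_mul]
  ring

lemma Ttil_van (g : PowerSeries AA) (n : ℕ) (h : ∀ k ≤ n + 1, coeff k g = 0) :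
    coeff n (Ttil g) = 0 := by
  rw [coeff_Ttil, h n (by omega), map_zero]

lemma TA_X (k : ℕ) : TA (MvPolynomial.X k) = MvPolynomial.X (k + 1) :=
  MvPolynomial.mkDerivation_X _ _ _

lemma TA_C_mul (a : ℂ) (p : AA) : TA (MvPolynomial.C a * p) = MvPolynomial.C a * TA p := by
  rw [← MvPolynomial.smul_eq_C_mul, ← MvPolynomial.smul_eq_C_mul, Derivation.map_smul]

/-- `exp (β ∑_{k ≥ 1} (zᵏ/k!) h_{k-1}) = ∑_{n ≥ 0} (zⁿ/n!) (T + β M_h)ⁿ(1)` in `A⟦z⟧`,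
i.e. `exp (β ∫₀ᶻ e^{xT} h dx) = e^{z(T + βh)} 1`. -/
theorem stmt10 (β : ℂ) :
    expPS (PowerSeries.mk fun k =>
        if k = 0 then 0
        else MvPolynomial.C (β * ((k.factorial : ℂ))⁻¹) * MvPolynomial.X (k - 1))
      = PowerSeries.mk fun n => MvPolynomial.C ((n.factorial : ℂ)⁻¹) *
          (fun a => TA a + MvPolynomial.C β * MvPolynomial.X 0 * a)^[n] 1 := by
  set f : PowerSeries AA := PowerSeries.mk fun k =>
      if k = 0 then 0
      else MvPolynomial.C (β * ((k.factorial : ℂ))⁻¹) * MvPolynomial.X (k - 1) with hfdef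
  have hf0 : constantCoeff f = 0 := by
    rw [← coeff_zero_eq_constantCoeff_apply, hfdef, coeff_mk, if_pos rfl]
  have hrel : derivativeFun f =
      Ttil f + PowerSeries.C (MvPolynomial.C β * MvPolynomial.X 0) := by
    ext n : 1
    rw [coeff_derivativeFun', map_add, coeff_Ttil, hfdef, coeff_mk, coeff_mk]
    cases n with
    | zero =>
      rw [if_pos rfl, map_zero, zero_add, if_neg (by omega : (0 + 1 : ℕ) ≠ 0), coeff_C,
        if_pos rfl]
      norm_num
    | succ n =>
      have h1 : (n + 1 + 1 : ℕ) ≠ 0 := by omega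
      have h2 : (n + 1 : ℕ) ≠ 0 := by omega
      rw [if_neg h1, if_neg h2, coeff_C, if_neg (by omega), add_zero]
      rw [TA_C_mul, TA_X]
      have h3 : n + 1 + 1 - 1 = n + 1 := by omega
      have h4 : n + 1 - 1 + 1 = n + 1 := by omega
      rw [h3, h4]
      have hcast : ((n + 1 : ℕ) : AA) + 1 = MvPolynomial.C ((n : ℂ) + 2) := by
        rw [show ((n : ℂ) + 2) = ((n + 2 : ℕ) : ℂ) by push_cast; ring, map_natCast]
        push_cast
        ring
      rw [hcast, mul_assoc, mul_comm (MvPolynomial.X (n + 1)), ← mul_assoc,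
        ← MvPolynomial.C_mul]
      congr 2
      rw [show n + 1 + 1 = (n + 1) + 1 from rfl, Nat.factorial_succ (n + 1)]
      have hnz : ((n + 1).factorial : ℂ) ≠ 0 := Nat.cast_ne_zero.mpr (Nat.factorial_ne_zero _)
      have h2n : ((n : ℂ) + 2) ≠ 0 := by
        have : ((n + 2 : ℕ) : ℂ) ≠ 0 := Nat.cast_ne_zero.mpr (by omega)
        push_cast at this
        exact this
      push_cast
      rw [mul_inv]
      rw [show ((n : ℂ) + 1 + 1) = (n : ℂ) + 2 by ring]
      rw [show β * (((n : ℂ) + 2)⁻¹ * (((n + 1).factorial : ℂ))⁻¹) * ((n : ℂ) + 2)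
          = β * (((n + 1).factorial : ℂ))⁻¹ * (((n : ℂ) + 2) * ((n : ℂ) + 2)⁻¹) by ring,
        mul_inv_cancel₀ h2n, mul_one]
  have hder : derivativeFun (expPS f) = derivativeFun f * expPS f := by
    refine delta_expPS _ derivativeFun_add ?_ ?_ ?_ hf0
    · intro q a
      ext n : 1
      rw [coeff_derivativeFun', coeff_smul, coeff_smul, coeff_derivativeFun', smul_mul_assoc]
    · intro a b
      rw [derivativeFun_mul, smul_eq_mul, smul_eq_mul]
      ring
    · intro g n h
      rw [coeff_derivativeFun', h (n + 1) le_rfl, zero_mul]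
  have hTder : Ttil (expPS f) = Ttil f * expPS f :=
    delta_expPS _ Ttil_add Ttil_smul Ttil_mul Ttil_van hf0
  have hrec : ∀ n : ℕ, coeff (n + 1) (expPS f) * ((n : AA) + 1)
      = TA (coeff n (expPS f))
        + MvPolynomial.C β * MvPolynomial.X 0 * coeff n (expPS f) := by
    intro n
    have h1 : derivativeFun (expPS f) =
        Ttil (expPS f) + PowerSeries.C (MvPolynomial.C β * MvPolynomial.X 0) * expPS f := by
      rw [hder, hrel, add_mul, ← hTder]
    have h2 := congrArg (coeff n) h1
    rw [coeff_derivativeFun', map_add, coeff_Ttil, coeff_C_mul] at h2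
    exact h2
  ext n : 1
  rw [coeff_mk]
  induction n with
  | zero =>
    have h0 : coeff 0 (expPS f) = 1 := by
      simp only [expPS, coeff_mk, zero_add, Finset.sum_range_one, pow_zero,
        Nat.factorial_zero, Nat.cast_one, inv_one, one_smul, PowerSeries.coeff_zero_one]
    rw [h0]
    simp only [Function.iterate_zero, id_eq, Nat.factorial_zero, Nat.cast_one, inv_one,
      map_one, one_mul]
  | succ n ih =>
    have hC : ((n : AA) + 1) = MvPolynomial.C ((n : ℂ) + 1) := by rw [map_add, map_natCast, map_one]
    have hne : ((n : ℂ) + 1) ≠ 0 := by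
      exact_mod_cast Nat.cast_add_one_ne_zero (R := ℂ) n
    have key := hrec n
    rw [ih] at key
    have hsolve : coeff (n + 1) (expPS f)
        = MvPolynomial.C ((n : ℂ) + 1)⁻¹ *
          (TA (MvPolynomial.C ((n.factorial : ℂ))⁻¹ *
              (fun a => TA a + MvPolynomial.C β * MvPolynomial.X 0 * a)^[n] 1)
            + MvPolynomial.C β * MvPolynomial.X 0 *
              (MvPolynomial.C ((n.factorial : ℂ))⁻¹ *
              (fun a => TA a + MvPolynomial.C β * MvPolynomial.X 0 * a)^[n] 1)) := by
      rw [← key, hC, mul_comm (coeff (n + 1) (expPS f)), ← mul_assoc, ← MvPolynomial.C_mul,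
        inv_mul_cancel₀ hne, MvPolynomial.C_1, one_mul]
    rw [hsolve, Function.iterate_succ_apply']
    set P := (fun a => TA a + MvPolynomial.C β * MvPolynomial.X 0 * a)^[n] 1 with hP
    rw [TA_C_mul]
    have hfact : (((n + 1).factorial : ℂ))⁻¹ = ((n : ℂ) + 1)⁻¹ * ((n.factorial : ℂ))⁻¹ := by
      rw [Nat.factorial_succ]
      push_cast
      rw [mul_inv]
    rw [hfact, MvPolynomial.C_mul]
    ring
end Main
end

section
/- Let d ≥ 2 be an integer, let ε ∈ {0,1}, and let β ∈ ℂ with β ≠ 0. Then the system of equations binom(β, k+1)·(−1)^{k+1} = (−1)^ε·binom(β, d−k)·(−1)^{d−k} for all k = 0, 1, …, d−1 holds if and only if either (a) ε = 0 and β = −1, or (b) ε ≡ d+1 (mod 2) and β = d+1. -/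
/-- The generalized binomial coefficient `binom(β,n) = (1/n!) ∏_{j=0}^{n-1} (β - j)`. -/
noncomputable def genBinom {R : Type*} [CommRing R] [Algebra ℚ R] (β : R) (n : ℕ) : R :=
  (n.factorial : ℚ)⁻¹ • ∏ j ∈ Finset.range n, (β - (j : R))

lemma genBinom_smul (β : ℂ) (n : ℕ) :
    genBinom β n = ((n.factorial : ℂ))⁻¹ * ∏ j ∈ Finset.range n, (β - (j : ℂ)) := by
  rw [genBinom, Rat.smul_def]; push_cast; ring
lemma genBinom_zero (β : ℂ) : genBinom β 0 = 1 := by simp [genBinom_smul]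
lemma genBinom_one (β : ℂ) : genBinom β 1 = β := by simp [genBinom_smul]
lemma genBinom_succ (β : ℂ) (n : ℕ) :
    genBinom β (n + 1) * ((n : ℂ) + 1) = genBinom β n * (β - n) := by
  rw [genBinom_smul, genBinom_smul, Finset.prod_range_succ, Nat.factorial_succ]
  have h1 : ((n.factorial : ℂ)) ≠ 0 := by exact_mod_cast Nat.factorial_ne_zero n
  have h2 : ((n : ℂ) + 1) ≠ 0 := Nat.cast_add_one_ne_zero n
  push_cast; field_simp

lemma genBinom_ne_zero_imp {β : ℂ} {n : ℕ} (h : genBinom β n ≠ 0) :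
    ∀ j < n, β ≠ (j : ℂ) := by
  intro j hj hji
  apply h
  rw [genBinom_smul]
  rw [Finset.prod_eq_zero (Finset.mem_range.mpr hj) (by rw [hji]; ring)]
  ring

lemma genBinom_neg_one (n : ℕ) : genBinom (-1 : ℂ) n = (-1) ^ n := by
  induction n with
  | zero => simp [genBinom_zero]
  | succ n ih =>
    have h2 : ((n : ℂ) + 1) ≠ 0 := Nat.cast_add_one_ne_zero n
    refine mul_right_cancel₀ h2 ?_
    rw [genBinom_succ, ih]; ring

lemma genBinom_natCast (m n : ℕ) : genBinom (m : ℂ) n = (m.choose n : ℂ) := by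
  induction n with
  | zero => simp [genBinom_zero]
  | succ n ih =>
    have h2 : ((n : ℂ) + 1) ≠ 0 := Nat.cast_add_one_ne_zero n
    have hs := genBinom_succ (m : ℂ) n
    rw [ih] at hs
    by_cases h : n ≤ m
    · have hc : (m.choose n : ℂ) * ((m : ℂ) - n) = (m.choose (n+1) : ℂ) * ((n : ℂ) + 1) := by
        have h3 : ((m.choose (n+1) * (n+1) : ℕ) : ℂ) = ((m.choose n * (m - n) : ℕ) : ℂ) := by
          exact_mod_cast congrArg (Nat.cast : ℕ → ℂ) (Nat.choose_succ_right_eq m n)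
        push_cast [Nat.cast_sub h] at h3
        linear_combination -h3
      exact mul_right_cancel₀ h2 (hs.trans hc)
    · have h1 : m.choose n = 0 := Nat.choose_eq_zero_of_lt (by omega)
      have h2' : m.choose (n+1) = 0 := Nat.choose_eq_zero_of_lt (by omega)
      rw [h1] at hs
      simp only [Nat.cast_zero, zero_mul] at hs
      rcases mul_eq_zero.mp hs with hz | hz
      · rw [hz, h2']; simp
      · exact absurd hz h2

lemma neg_one_pow_mul_self (n : ℕ) : (-1 : ℂ) ^ n * (-1) ^ n = 1 := by
  rw [← mul_pow]; norm_num

lemma neg_one_pow_mod (a : ℕ) : (-1 : ℂ) ^ a = (-1) ^ (a % 2) := by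
  conv_lhs => rw [← Nat.div_add_mod a 2]
  rw [pow_add, pow_mul]
  norm_num

lemma neg_one_pow_congr' {a b : ℕ} (h : a % 2 = b % 2) : (-1 : ℂ) ^ a = (-1) ^ b := by
  rw [neg_one_pow_mod a, neg_one_pow_mod b, h]


/-- For `d ≥ 2`, `ε ∈ {0,1}`, `β ≠ 0`: the system
`binom(β,k+1)·(-1)^{k+1} = (-1)^ε·binom(β,d-k)·(-1)^{d-k}` for `k = 0,…,d-1` holds iff
either `ε = 0` and `β = -1`, or `ε ≡ d+1 (mod 2)` and `β = d+1`. -/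
theorem stmt12 (d : ℕ) (hd : 2 ≤ d) (ε : ℕ) (hε : ε = 0 ∨ ε = 1) (β : ℂ) (hβ : β ≠ 0) :
    (∀ k : ℕ, k < d →
        genBinom β (k + 1) * (-1 : ℂ) ^ (k + 1)
          = (-1 : ℂ) ^ ε * genBinom β (d - k) * (-1 : ℂ) ^ (d - k))
      ↔ ((ε = 0 ∧ β = -1) ∨ (ε % 2 = (d + 1) % 2 ∧ β = (d : ℂ) + 1)) := by
  constructor
  · intro h
    set s : ℂ := (-1 : ℂ) ^ ε * (-1 : ℂ) ^ d with hs_def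
    have hs2 : s * s = 1 := by
      rw [hs_def]
      linear_combination ((-1:ℂ)^d * (-1)^d) * (neg_one_pow_mul_self ε) + neg_one_pow_mul_self d
    have hsne : s ≠ 0 := by
      intro h0; rw [h0] at hs2; simp at hs2
    -- equation k = 0
    have E0 := h 0 (by omega)
    simp only [Nat.sub_zero, Nat.zero_add, genBinom_one, pow_one] at E0
    -- E0 : β * (-1) = (-1)^ε * genBinom β d * (-1)^d
    have hBd : genBinom β d = -s * β := by
      have : s * (β * (-1)) = s * ((-1)^ε * genBinom β d * (-1)^d) := by rw [E0]
      calc genBinom β d = (s * s) * genBinom β d := by rw [hs2]; ring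
        _ = s * ((-1:ℂ)^ε * genBinom β d * (-1)^d) := by rw [hs_def]; ring
        _ = s * (β * (-1)) := this.symm
        _ = -s * β := by ring
    have hBd_ne : genBinom β d ≠ 0 := by
      rw [hBd]; exact mul_ne_zero (neg_ne_zero.mpr hsne) hβ
    have hβj : ∀ j < d, β ≠ (j : ℂ) := genBinom_ne_zero_imp hBd_ne
    -- equation k = 1
    have E1 := h 1 (by omega)
    -- genBinom β 2 * (-1)^2 = (-1)^ε * genBinom β (d-1) * (-1)^(d-1)
    have hpow : (-1 : ℂ) ^ (d - 1) = -(-1 : ℂ) ^ d := by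
      have h1 : (-1 : ℂ) ^ (d - 1) * (-1) = (-1) ^ d := by
        rw [← pow_succ]; congr 1; omega
      linear_combination -h1
    rw [hpow] at E1
    have E1' : genBinom β 2 = -s * genBinom β (d - 1) := by
      rw [hs_def]
      linear_combination E1
    -- recurrences
    have R2 : genBinom β 2 * 2 = β * (β - 1) := by
      have := genBinom_succ β 1
      rw [genBinom_one] at this
      push_cast at this
      linear_combination this
    have Rd : genBinom β d * (d : ℂ) = genBinom β (d - 1) * (β - ((d : ℂ) - 1)) := by
      have h1 := genBinom_succ β (d - 1)
      have h2 : d - 1 + 1 = d := by omega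
      rw [h2] at h1
      have h3 : ((d - 1 : ℕ) : ℂ) = (d : ℂ) - 1 := by
        push_cast [Nat.cast_sub (by omega : 1 ≤ d)]; ring
      rw [h3] at h1
      linear_combination h1
    -- derive the quadratic
    have key : β * ((β + 1) * (β - ((d : ℂ) + 1))) = 0 := by
      have c1 : β * (β - 1) * (β - ((d:ℂ) - 1)) = (β - ((d:ℂ) - 1)) * (genBinom β 2 * 2) := by
        rw [R2]; ring
      have c2 : (β - ((d:ℂ) - 1)) * (genBinom β 2 * 2) = -2 * s * (genBinom β (d-1) * (β - ((d:ℂ) - 1))) := by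
        rw [E1']; ring
      have c3 : genBinom β (d-1) * (β - ((d:ℂ) - 1)) = genBinom β d * (d : ℂ) := Rd.symm
      have c4 : -2 * s * (genBinom β d * (d : ℂ)) = (s * s) * (2 * β * (d : ℂ)) := by
        rw [hBd]; ring
      rw [hs2] at c4
      have : β * (β - 1) * (β - ((d:ℂ) - 1)) = 2 * β * (d : ℂ) := by
        rw [c1, c2, c3, c4]; ring
      linear_combination this
    rcases mul_eq_zero.mp key with h0 | h0
    · exact absurd h0 hβ
    rcases mul_eq_zero.mp h0 with h1 | h1
    · -- β = -1
      have hβv : β = -1 := by linear_combination h1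
      left
      refine ⟨?_, hβv⟩
      rw [hβv, genBinom_neg_one] at hBd
      -- (-1)^d = -s * (-1) = s
      have hsv : s = (-1 : ℂ) ^ d := by linear_combination -hBd
      have hε1 : (-1 : ℂ) ^ ε = 1 := by
        have hdne : (-1 : ℂ) ^ d ≠ 0 := by
          intro h0
          have := neg_one_pow_mul_self d
          rw [h0] at this; simp at this
        apply mul_right_cancel₀ hdne
        rw [one_mul, ← hs_def, hsv]
      rcases hε with h | h
      · exact h
      · rw [h] at hε1; norm_num at hε1
    · -- β = d + 1
      have hβv : β = (d : ℂ) + 1 := by linear_combination h1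
      right
      refine ⟨?_, hβv⟩
      have hcast : ((d : ℂ) + 1) = ((d + 1 : ℕ) : ℂ) := by push_cast; ring
      rw [hβv, hcast, genBinom_natCast] at hBd
      rw [Nat.choose_succ_self_right] at hBd
      -- (d+1 : ℂ) = -s * ((d+1:ℕ):ℂ)
      have hd1ne : ((d + 1 : ℕ) : ℂ) ≠ 0 := Nat.cast_ne_zero.mpr (by omega)
      have hsv : s = -1 := by
        have h5 : ((d+1:ℕ) : ℂ) * 1 = ((d+1:ℕ) : ℂ) * (-s) := by
          linear_combination hBd
        have h6 := mul_left_cancel₀ hd1ne h5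
        linear_combination h6
      -- s = (-1)^(ε+d) = -1 ⇒ ε + d odd
      have hodd : (ε + d) % 2 = 1 := by
        rcases Nat.even_or_odd (ε + d) with he | ho
        · exfalso
          have : s = 1 := by
            rw [hs_def, ← pow_add]
            exact he.neg_one_pow
          rw [this] at hsv; norm_num at hsv
        · exact Nat.odd_iff.mp ho
      omega
  · rintro (⟨hε0, hβv⟩ | ⟨hpar, hβv⟩) k hk
    · subst hε0 hβv
      rw [genBinom_neg_one, genBinom_neg_one, pow_zero, one_mul,
        neg_one_pow_mul_self, neg_one_pow_mul_self]
    · subst hβv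
      have hcast : ((d : ℂ) + 1) = ((d + 1 : ℕ) : ℂ) := by push_cast; ring
      rw [hcast, genBinom_natCast, genBinom_natCast]
      have hsymm : (d + 1).choose (d - k) = (d + 1).choose (k + 1) := by
        have : d - k = (d + 1) - (k + 1) := by omega
        rw [this, Nat.choose_symm (by omega)]
      rw [hsymm]
      have hsign : (-1 : ℂ) ^ (k + 1) = (-1 : ℂ) ^ ε * (-1 : ℂ) ^ (d - k) := by
        rw [← pow_add]
        exact neg_one_pow_congr' (by omega)
      rw [hsign]; ring
end
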